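/- Let n ≡ 3 (mod 4) be an odd composite integer that is a strong pseudoprime to base 2, and let k ≥ 1 be an integer. Set P = 2^k and Q = 2^{2k-1}. Then n is a Lucas-V pseudoprime with parameters P, Q; that is, V_{n+1} ≡ 2Q (mod n), where V is the Lucas V-sequence with parameters P, Q, and D = P^2 - 4Q satisfies the Jacobi symbol condition (D/n) = -1. -/

import Mathlib

def lucasU (P Q : ℤ) : ℕ → ℤ
  | 0 => 0
  | 1 => 1
  | k + 2 => P * lucasU P Q (k + 1) - Q * lucasU P Q k

def lucasV (P Q : ℤ) : ℕ → ℤ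
  | 0 => 2
  | 1 => P
  | k + 2 => P * lucasV P Q (k + 1) - Q * lucasV P Q k

/-- `n` is a strong pseudoprime to base 2. -/
def SPsp2 (n : ℕ) : Prop :=
  Odd n ∧ ¬ n.Prime ∧ 1 < n ∧
  ∃ d s : ℕ, Odd d ∧ n - 1 = d * 2 ^ s ∧
    ((2 : ZMod n) ^ d = 1 ∨ ∃ r < s, (2 : ZMod n) ^ (d * 2 ^ r) = -1)


lemma lucasV_rec (P Q : ℤ) (m : ℕ) :
    lucasV P Q (m + 2) = P * lucasV P Q (m + 1) - Q * lucasV P Q m := rfl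

lemma lucasV_four (P Q : ℤ) (h : 2*Q = P^2) : lucasV P Q 4 = -2*Q^2 := by
  simp [lucasV]; linear_combination (2*Q - P^2)*h

lemma lucasV_add_eight (P Q : ℤ) (h : 2*Q = P^2) : ∀ m, lucasV P Q (m + 8) = Q^4 * lucasV P Q m := by
  intro m
  induction m using Nat.strong_induction_on with
  | _ m ih =>
    match m with
    | 0 => simp [lucasV]; linear_combination (-P^6 + 6*P^4*Q - 8*P^2*Q^2)*h
    | 1 => simp [lucasV]; linear_combination (-P^7 + 7*P^5*Q - 13*P^3*Q^2 + 4*P*Q^3)*h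
    | (m+2) =>
      have h1 := ih m (by omega)
      have h2 := ih (m+1) (by omega)
      calc lucasV P Q (m + 2 + 8) = P * lucasV P Q ((m+1)+8) - Q * lucasV P Q (m+8) := rfl
        _ = Q^4 * (P * lucasV P Q (m+1) - Q * lucasV P Q m) := by rw [h1, h2]; ring
        _ = Q^4 * lucasV P Q (m+2) := by rw [lucasV_rec]

lemma lucasV_mul_eight (P Q : ℤ) (h : 2*Q = P^2) (q r : ℕ) :
    lucasV P Q (8 * q + r) = Q^(4*q) * lucasV P Q r := by
  induction q with
  | zero => simp
  | succ q ih =>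
    rw [show 8 * (q+1) + r = (8*q + r) + 8 by ring, lucasV_add_eight P Q h, ih]
    ring

section helpers2
lemma mod8_helper (S : ℕ → Prop) (h1 : S (1 % 8))
    (hS : ∀ x y : ℕ, S (x % 8) → S (y % 8) → S (x * y % 8)) :
    ∀ n : ℕ, 0 < n → (∀ p, p.Prime → p ∣ n → S (p % 8)) → S (n % 8) := by
  intro n
  induction n using Nat.strong_induction_on with
  | _ n ih =>
    intro hn hp
    rcases eq_or_lt_of_le (show 1 ≤ n from hn) with h | h
    · rw [← h]; exact h1
    · have hp1 : n.minFac.Prime := Nat.minFac_prime (by omega)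
      have hdvd : n.minFac ∣ n := Nat.minFac_dvd n
      have h2 : 2 ≤ n.minFac := hp1.two_le
      have hm : n / n.minFac < n := Nat.div_lt_self (by omega) (by omega)
      have hm0 : 0 < n / n.minFac := Nat.div_pos (Nat.le_of_dvd (by omega) hdvd) (by omega)
      have hrec := ih (n / n.minFac) hm hm0 (fun p pp pd => hp p pp (pd.trans (Nat.div_dvd_of_dvd hdvd)))
      have := hS n.minFac (n / n.minFac) (hp _ hp1 hdvd) hrec
      rwa [Nat.mul_div_cancel' hdvd] at this

lemma comp_case1 (n d : ℕ) (hodd : Odd n) (hn : 0 < n) (hd : Odd d)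
    (h : (2 : ZMod n) ^ d = 1) : n % 8 = 1 ∨ n % 8 = 7 := by
  refine mod8_helper (fun r => r = 1 ∨ r = 7) (by norm_num) ?_ n hn ?_
  · intro x y hx hy
    rcases hx with hx | hx <;> rcases hy with hy | hy <;>
      rw [Nat.mul_mod, hx, hy] <;> decide
  · intro p pp pd
    have hp2 : p ≠ 2 := by
      rintro rfl
      have := Nat.odd_iff.mp hodd
      obtain ⟨c, rfl⟩ := pd
      omega
    haveI := Fact.mk pp
    -- transfer to ZMod p
    have hcast : (2 : ZMod p) ^ d = 1 := by
      have := congrArg (ZMod.castHom pd (ZMod p)) h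
      rwa [map_pow, map_ofNat, map_one] at this
    -- 2 is a square mod p
    have hsq : IsSquare (2 : ZMod p) := by
      refine ⟨(2 : ZMod p) ^ ((d+1)/2), ?_⟩
      have h2 : (2 : ZMod p) ^ ((d+1)/2) * (2 : ZMod p) ^ ((d+1)/2) = 2 ^ (d + 1) := by
        rw [← pow_add]
        congr 1
        have := Nat.odd_iff.mp hd
        omega
      rw [h2, pow_succ, hcast, one_mul]
    exact (ZMod.exists_sq_eq_two_iff hp2).mp hsq

lemma comp_case2 (n d : ℕ) (hodd : Odd n) (hn : 0 < n) (hd : Odd d)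
    (h : (2 : ZMod n) ^ d = -1) : n % 8 = 1 ∨ n % 8 = 3 := by
  refine mod8_helper (fun r => r = 1 ∨ r = 3) (by norm_num) ?_ n hn ?_
  · intro x y hx hy
    rcases hx with hx | hx <;> rcases hy with hy | hy <;>
      rw [Nat.mul_mod, hx, hy] <;> decide
  · intro p pp pd
    have hp2 : p ≠ 2 := by
      rintro rfl
      have := Nat.odd_iff.mp hodd
      obtain ⟨c, rfl⟩ := pd
      omega
    haveI := Fact.mk pp
    have hcast : (2 : ZMod p) ^ d = -1 := by
      have := congrArg (ZMod.castHom pd (ZMod p)) h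
      rwa [map_pow, map_ofNat, map_neg, map_one] at this
    -- now the prime argument
    have hoddp : p % 2 = 1 := Nat.odd_iff.mp (pp.odd_of_ne_two hp2)
    have hp3 : 3 ≤ p := by have := pp.two_le; omega
    have hne : (-1 : ZMod p) ≠ 1 := by
      intro hcon
      have h0 : ((2 : ℤ) : ZMod p) = 0 := by push_cast; linear_combination -hcon
      rw [ZMod.intCast_zmod_eq_zero_iff_dvd] at h0
      have := Int.le_of_dvd (by norm_num) h0
      omega
    have h20 : (2 : ZMod p) ≠ 0 := by
      intro hcon
      have hd1 : 1 ≤ d := hd.pos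
      rw [hcon, zero_pow (by omega)] at hcast
      exact hne (by linear_combination -2*hcast)
    have hferm : (2 : ZMod p) ^ (p - 1) = 1 := ZMod.pow_card_sub_one_eq_one h20
    have hhalf : ((2 : ZMod p) ^ (p / 2)) * ((2 : ZMod p) ^ (p / 2)) = 1 := by
      rw [← pow_add, show p / 2 + p / 2 = p - 1 by omega, hferm]
    have hpm : (2 : ZMod p) ^ (p / 2) = 1 ∨ (2 : ZMod p) ^ (p / 2) = -1 :=
      mul_self_eq_one_iff.mp hhalf
    rcases Nat.even_or_odd (p / 2) with he | ho
    · have h1 : (2 : ZMod p) ^ (p / 2) = 1 := by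
        rcases hpm with h1 | h1
        · exact h1
        · exfalso
          have e1 : (2 : ZMod p) ^ (d * (p / 2)) = (-1) ^ (p/2) := by
            rw [pow_mul, hcast]
          have e2 : (2 : ZMod p) ^ (d * (p / 2)) = (-1) ^ d := by
            rw [mul_comm, pow_mul, h1]
          rw [he.neg_one_pow] at e1
          rw [hd.neg_one_pow] at e2
          exact hne (e2.symm.trans e1)
      have hsq : IsSquare (2 : ZMod p) := (ZMod.euler_criterion p h20).mpr h1
      have := (ZMod.exists_sq_eq_two_iff hp2).mp hsq
      have he' : p % 4 = 1 := by
        have := Nat.even_iff.mp he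
        omega
      omega
    · have hns : ¬ IsSquare (2 : ZMod p) := by
        intro hsq
        have h1 : (2 : ZMod p) ^ (p / 2) = 1 := (ZMod.euler_criterion p h20).mp hsq
        have e1 : (2 : ZMod p) ^ (d * (p / 2)) = 1 := by rw [mul_comm, pow_mul, h1, one_pow]
        have e2 : (2 : ZMod p) ^ (d * (p / 2)) = -1 := by
          rw [pow_mul, hcast, ho.neg_one_pow]
        exact hne (e2.symm.trans e1)
      have := (ZMod.exists_sq_eq_two_iff hp2).not.mp hns
      have ho' : p % 4 = 3 := by
        have := Nat.odd_iff.mp ho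
        omega
      omega
end helpers2

theorem stmt_7 (n : ℕ) (hn4 : n % 4 = 3) (hspsp : SPsp2 n) (k : ℕ) (hk : 1 ≤ k) :
    lucasV (2 ^ k) (2 ^ (2 * k - 1)) (n + 1) ≡ 2 * 2 ^ (2 * k - 1) [ZMOD (n : ℤ)] ∧
    jacobiSym ((2 ^ k : ℤ) ^ 2 - 4 * 2 ^ (2 * k - 1)) n = -1 := by
  obtain ⟨hodd, hnp, hn1, d, s, hd, hds, hcase⟩ := hspsp
  have hn3 : 3 ≤ n := by omega
  have hd2 : d % 2 = 1 := Nat.odd_iff.mp hd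
  -- s = 1
  have hs1 : s = 1 := by
    rcases s with _ | _ | s
    · rw [pow_zero, mul_one] at hds; omega
    · rfl
    · exfalso
      obtain ⟨t, ht⟩ : ∃ t, n - 1 = 4 * t :=
        ⟨d * 2 ^ s, by rw [hds, pow_succ, pow_succ]; ring⟩
      omega
  subst hs1
  rw [pow_one] at hds
  have hε : (2 : ZMod n) ^ d = 1 ∨ (2 : ZMod n) ^ d = -1 := by
    rcases hcase with h | ⟨r, hr, h⟩
    · exact Or.inl h
    · right
      have hr0 : r = 0 := by omega
      subst hr0
      simpa using h
  have h8 : n % 8 = 3 ∨ n % 8 = 7 := by omega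
  have key : ((2 : ZMod n) ^ d = 1 ∧ n % 8 = 7) ∨ ((2 : ZMod n) ^ d = -1 ∧ n % 8 = 3) := by
    rcases hε with h | h
    · have := comp_case1 n d hodd (by omega) hd h
      exact Or.inl ⟨h, by omega⟩
    · have := comp_case2 n d hodd (by omega) hd h
      exact Or.inr ⟨h, by omega⟩
  have e1 : ((2:ℤ)^k)^2 = 2 * 2^(2*k-1) := by
    rw [← pow_mul, show k*2 = (2*k-1)+1 by omega, pow_succ]; ring
  constructor
  · -- Lucas part
    rw [← ZMod.intCast_eq_intCast_iff]
    have hPQ : 2 * (2:ℤ)^(2*k-1) = ((2:ℤ)^k)^2 := e1.symm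
    have hodd2k : Odd (2*k-1) := ⟨k-1, by omega⟩
    rcases key with ⟨h1, h8'⟩ | ⟨h1, h8'⟩
    · -- n % 8 = 7
      set q := (n+1)/8 with hqdef
      have hq : n + 1 = 8 * q + 0 := by omega
      have hdq : d + 1 = 4 * q := by omega
      rw [hq, lucasV_mul_eight _ _ hPQ q 0, show lucasV ((2:ℤ)^k) ((2:ℤ)^(2*k-1)) 0 = 2 from rfl]
      push_cast
      have hkey : ((2:ZMod n)^(2*k-1))^(4*q) = (2:ZMod n)^(2*k-1) := by
        rw [← pow_mul, show (2*k-1)*(4*q) = d*(2*k-1) + (2*k-1) by rw [← hdq]; ring,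
          pow_add, pow_mul, h1, one_pow, one_mul]
      rw [hkey]; ring
    · -- n % 8 = 3
      set q := (n + 1 - 4)/8 with hqdef
      have hq : n + 1 = 8 * q + 4 := by omega
      have hdq : d = 4 * q + 1 := by omega
      rw [hq, lucasV_mul_eight _ _ hPQ q 4, lucasV_four _ _ hPQ]
      push_cast
      have hkey : ((2:ZMod n)^(2*k-1))^(4*q) * (2:ZMod n)^(2*k-1) = -1 := by
        rw [← pow_mul, ← pow_add, show (2*k-1)*(4*q) + (2*k-1) = d*(2*k-1) by rw [hdq]; ring,
          pow_mul, h1, hodd2k.neg_one_pow]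
      linear_combination (-2 * (2:ZMod n)^(2*k-1)) * hkey
  · -- Jacobi part
    have hD : ((2:ℤ)^k)^2 - 4 * 2^(2*k-1) = (-1) * ((2:ℤ)^k)^2 := by
      rw [e1]; ring
    have hcop : Nat.Coprime (2^k) n := Nat.Coprime.pow_left k hodd.coprime_two_left
    have hgcd : Int.gcd ((2:ℤ)^k) n = 1 := by
      rw [show ((2:ℤ)^k) = ((2^k : ℕ) : ℤ) by push_cast; ring, Int.gcd_natCast_natCast]
      exact hcop
    rw [hD, jacobiSym.mul_left, jacobiSym.at_neg_one hodd, ZMod.χ₄_nat_three_mod_four hn4,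
      jacobiSym.sq_one' hgcd]
    norm_num
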